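/- For every irrational x ∈ (0,1) and every integer k ≥ 1, the k-th principal convergent p_k/q_k of the odd-odd continued fraction of x is an intermediate convergent of the regular continued fraction of x: there exist an integer n ≥ 1 and an integer j with 1 ≤ j ≤ d_n such that p_k·(q^R_{n−2} + j·q^R_{n−1}) = q_k·(p^R_{n−2} + j·p^R_{n−1}). -/

import Mathlib

/-- The odd-odd continued fraction map on `[0,1]`.  For `x ∈ [(k-1)/k, k/(k+1))` with `k ≥ 1`
one has `k = ⌊1/(1-x)⌋`, and the two branches are separated by `(2k-1)/(2k+1)`. -/
noncomputable def oocfT (x : ℝ) : ℝ :=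
  if x = 1 then 1
  else if x < (2 * (⌊1 / (1 - x)⌋ : ℝ) - 1) / (2 * (⌊1 / (1 - x)⌋ : ℝ) + 1) then
    ((⌊1 / (1 - x)⌋ : ℝ) * x - ((⌊1 / (1 - x)⌋ : ℝ) - 1)) /
      ((⌊1 / (1 - x)⌋ : ℝ) - ((⌊1 / (1 - x)⌋ : ℝ) + 1) * x)
  else
    ((⌊1 / (1 - x)⌋ : ℝ) - ((⌊1 / (1 - x)⌋ : ℝ) + 1) * x) /
      ((⌊1 / (1 - x)⌋ : ℝ) * x - ((⌊1 / (1 - x)⌋ : ℝ) - 1))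

/-- OOCF partial quotient `a` of a point `y`: `a = k+1` if `y` is in the lower branch
interval `((k-1)/k, (2k-1)/(2k+1))`, and `a = k` if `y ∈ ((2k-1)/(2k+1), k/(k+1))`,
where `k = ⌊1/(1-y)⌋`. -/
noncomputable def oocfA (y : ℝ) : ℤ :=
  if y < (2 * (⌊1 / (1 - y)⌋ : ℝ) - 1) / (2 * (⌊1 / (1 - y)⌋ : ℝ) + 1) then ⌊1 / (1 - y)⌋ + 1
  else ⌊1 / (1 - y)⌋

/-- OOCF partial quotient `ε` of a point `y`: `ε = -1` on the lower branch interval and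
`ε = 1` on the upper one. -/
noncomputable def oocfE (y : ℝ) : ℤ :=
  if y < (2 * (⌊1 / (1 - y)⌋ : ℝ) - 1) / (2 * (⌊1 / (1 - y)⌋ : ℝ) + 1) then -1 else 1

/-- The OOCF convergents `(p'_n, q'_n, p_n, q_n)` of `x`, defined by
`p'_0 = 1, q'_0 = 0, p_0 = 1, q_0 = 1` and
`p'_n = a_n p_{n-1} - p'_{n-1}`, `q'_n = a_n q_{n-1} - q'_{n-1}`,
`p_n = 2 p'_n + ε_n p_{n-1}`, `q_n = 2 q'_n + ε_n q_{n-1}`,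
where `(a_n, ε_n)` are the partial quotients of `x`, i.e. `a_n = oocfA (oocfT^[n-1] x)`,
`ε_n = oocfE (oocfT^[n-1] x)`. -/
noncomputable def oocfConv (x : ℝ) : ℕ → ℤ × ℤ × ℤ × ℤ
  | 0 => (1, 0, 1, 1)
  | n + 1 =>
    let c := oocfConv x n
    (oocfA (oocfT^[n] x) * c.2.2.1 - c.1,
     oocfA (oocfT^[n] x) * c.2.2.2 - c.2.1,
     2 * (oocfA (oocfT^[n] x) * c.2.2.1 - c.1) + oocfE (oocfT^[n] x) * c.2.2.1,
     2 * (oocfA (oocfT^[n] x) * c.2.2.2 - c.2.1) + oocfE (oocfT^[n] x) * c.2.2.2)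

/-- `n`-th sub-convergent numerator `p'_n`. -/
noncomputable def oocfP' (x : ℝ) (n : ℕ) : ℤ := (oocfConv x n).1

/-- `n`-th sub-convergent denominator `q'_n`. -/
noncomputable def oocfQ' (x : ℝ) (n : ℕ) : ℤ := (oocfConv x n).2.1

/-- `n`-th principal convergent numerator `p_n`. -/
noncomputable def oocfP (x : ℝ) (n : ℕ) : ℤ := (oocfConv x n).2.2.1

/-- `n`-th principal convergent denominator `q_n`. -/
noncomputable def oocfQ (x : ℝ) (n : ℕ) : ℤ := (oocfConv x n).2.2.2

/-- `n`-th pseudo-convergent numerator: `p''_n = p'_n + ε_n p_{n-1}` for `n ≥ 1`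
(with the convention `p''_0 = 0`). -/
noncomputable def oocfP'' (x : ℝ) : ℕ → ℤ
  | 0 => 0
  | n + 1 => oocfP' x (n + 1) + oocfE (oocfT^[n] x) * oocfP x n

/-- `n`-th pseudo-convergent denominator: `q''_n = q'_n + ε_n q_{n-1}` for `n ≥ 1`
(with the convention `q''_0 = 1`). -/
noncomputable def oocfQ'' (x : ℝ) : ℕ → ℤ
  | 0 => 1
  | n + 1 => oocfQ' x (n + 1) + oocfE (oocfT^[n] x) * oocfQ x n

/-- The Gauss map. -/
noncomputable def gauss (x : ℝ) : ℝ := if x = 0 then 0 else Int.fract (1 / x)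

/-- The regular continued fraction partial quotient `d_{n+1}(x) = ⌊1 / G^n(x)⌋`. -/
noncomputable def rcfD (x : ℝ) (n : ℕ) : ℤ := ⌊1 / (gauss^[n] x)⌋

/-- RCF convergents, with index shifted by one: `rcfPQ x (n+1) = (p^R_n, q^R_n)`,
so `rcfPQ x 0 = (p^R_{-1}, q^R_{-1}) = (1,0)`, `rcfPQ x 1 = (p^R_0, q^R_0) = (0,1)` and
`p^R_n = d_n p^R_{n-1} + p^R_{n-2}`, `q^R_n = d_n q^R_{n-1} + q^R_{n-2}`. -/
noncomputable def rcfPQ (x : ℝ) : ℕ → ℤ × ℤ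
  | 0 => (1, 0)
  | 1 => (0, 1)
  | n + 2 =>
    (rcfD x n * (rcfPQ x (n + 1)).1 + (rcfPQ x n).1,
     rcfD x n * (rcfPQ x (n + 1)).2 + (rcfPQ x n).2)

lemma gauss_eq (x : ℝ) (hx : x ≠ 0) : gauss x = 1/x - ⌊1/x⌋ := by
  rw [gauss, if_neg hx, ← Int.self_sub_floor]

lemma gauss_props (x : ℝ) (hirr : Irrational x) (h0 : 0 < x) :
    Irrational (gauss x) ∧ 0 < gauss x ∧ gauss x < 1 := by
  have hx : x ≠ 0 := ne_of_gt h0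
  have h1 : Irrational (1/x) := by rw [one_div]; exact hirr.inv
  have h2 : Irrational (gauss x) := by
    rw [gauss_eq x hx]; exact h1.sub_intCast _
  refine ⟨h2, ?_, ?_⟩
  · have hge : 0 ≤ gauss x := by
      rw [gauss_eq x hx]; have := Int.floor_le (1/x); linarith
    rcases lt_or_eq_of_le hge with h | h
    · exact h
    · exact absurd h.symm h2.ne_zero
  · rw [gauss_eq x hx]
    have := Int.lt_floor_add_one (1/x); linarith

lemma rcfD_zero_ge_one (x : ℝ) (h0 : 0 < x) (h1 : x < 1) : 1 ≤ rcfD x 0 := by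
  have : (1:ℝ) ≤ 1/x := by
    rw [le_div_iff₀ h0]; linarith
  exact_mod_cast Int.le_floor.mpr (by exact_mod_cast this)

lemma rcfD_floor (x : ℝ) : rcfD x 0 = ⌊1/x⌋ := by simp [rcfD]

lemma rcfD_succ (x : ℝ) (n : ℕ) : rcfD x (n+1) = rcfD (gauss x) n := by
  simp [rcfD, Function.iterate_succ_apply]

lemma rcfPQ_transfer (x : ℝ) : ∀ m : ℕ,
    (rcfPQ x (m+1)).1 = (rcfPQ (gauss x) m).2 ∧
    (rcfPQ x (m+1)).2 = rcfD x 0 * (rcfPQ (gauss x) m).2 + (rcfPQ (gauss x) m).1 := by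
  intro m
  induction m using Nat.twoStepInduction with
  | zero => simp [rcfPQ]
  | one => simp [rcfPQ]
  | more m ih1 ih2 =>
    obtain ⟨a1, a2⟩ := ih1
    obtain ⟨b1, b2⟩ := ih2
    have hd : rcfD x (m+1) = rcfD (gauss x) m := rcfD_succ x m
    constructor
    · show rcfD x (m+1) * (rcfPQ x (m+2)).1 + (rcfPQ x (m+1)).1 = _
      rw [hd, b1, a1]
      show _ = rcfD (gauss x) m * (rcfPQ (gauss x) (m+1)).2 + (rcfPQ (gauss x) m).2
      ring
    · show rcfD x (m+1) * (rcfPQ x (m+2)).2 + (rcfPQ x (m+1)).2 = _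
      rw [hd, b2, a2]
      show _ = rcfD x 0 * (rcfD (gauss x) m * (rcfPQ (gauss x) (m+1)).2 + (rcfPQ (gauss x) m).2)
          + (rcfD (gauss x) m * (rcfPQ (gauss x) (m+1)).1 + (rcfPQ (gauss x) m).1)
      ring

lemma intermediate_of_parents : ∀ N : ℕ, ∀ x : ℝ, Irrational x → 0 < x → x < 1 →
    ∀ u v u' v' : ℤ, 0 ≤ u → 0 ≤ v → 0 ≤ u' → 0 ≤ v' →
    u' * v - u * v' = 1 → (u:ℝ) < v * x → (v':ℝ) * x < u' →
    u + v + u' + v' ≤ (N:ℤ) →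
    ∃ n : ℕ, 1 ≤ n ∧ ∃ j : ℤ, 1 ≤ j ∧ j ≤ rcfD x (n - 1) ∧
      (u + u') * ((rcfPQ x (n - 1)).2 + j * (rcfPQ x n).2) =
        (v + v') * ((rcfPQ x (n - 1)).1 + j * (rcfPQ x n).1) := by
  intro N
  induction N with
  | zero =>
    intro x hirr h0 h1 u v u' v' hu hv hu' hv' hdet hlx hrx hN
    exfalso
    have h2 : 1 ≤ u' * v := by nlinarith
    have h3 : 1 ≤ u' := by by_contra h; push_neg at h; nlinarith
    have h4 : 1 ≤ v := by by_contra h; push_neg at h; nlinarith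
    have : ((0:ℕ):ℤ) = 0 := rfl
    omega
  | succ N ih =>
    intro x hirr h0 h1 u v u' v' hu hv hu' hv' hdet hlx hrx hN
    have hxne : x ≠ 0 := ne_of_gt h0
    have h2 : 1 ≤ u' * v := by nlinarith
    have hu'1 : 1 ≤ u' := by by_contra h; push_neg at h; nlinarith
    have hv1 : 1 ≤ v := by by_contra h; push_neg at h; nlinarith
    set d : ℤ := rcfD x 0 with hd
    have hd1 : 1 ≤ d := rcfD_zero_ge_one x h0 h1
    have hdf : d = ⌊1/x⌋ := rcfD_floor x
    have hdlt : (d:ℝ) < 1/x := by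
      rcases lt_or_eq_of_le (hdf ▸ Int.floor_le (1/x)) with h | h
      · exact h
      · exfalso
        have : Irrational (1/x) := by rw [one_div]; exact hirr.inv
        exact (this.ne_int d) h.symm
    have hdx : (d:ℝ) * x < 1 := by
      have := mul_lt_mul_of_pos_right hdlt h0
      rwa [one_div, inv_mul_cancel₀ hxne] at this
    rcases eq_or_lt_of_le hu with hu0 | hu1
    · -- u = 0 case
      have hu0 : u = 0 := hu0.symm
      have huv : u' = 1 ∧ v = 1 := by
        have : u' * v = 1 := by rw [hu0] at hdet; linarith
        rcases Int.mul_eq_one_iff_eq_one_or_neg_one.mp this with ⟨h1', h2'⟩ | ⟨h1', h2'⟩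
        · exact ⟨h1', h2'⟩
        · omega
      obtain ⟨hu'e, hve⟩ := huv
      have hv'lt : (v':ℝ) < 1/x := by
        rw [lt_div_iff₀ h0]
        rw [hu'e] at hrx; exact_mod_cast hrx
      have hv'd : v' ≤ d := by
        rw [hdf]; exact Int.le_floor.mpr hv'lt.le
      by_cases hj : v' + 1 ≤ d
      · refine ⟨1, le_refl 1, v' + 1, by omega, by simpa using hj, ?_⟩
        show (u + u') * ((rcfPQ x 0).2 + (v'+1) * (rcfPQ x 1).2) =
          (v + v') * ((rcfPQ x 0).1 + (v'+1) * (rcfPQ x 1).1)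
        subst hu0 hu'e hve
        simp [rcfPQ]
        ring
      · have hv'e : v' = d := by omega
        refine ⟨2, by omega, 1, le_refl 1, ?_, ?_⟩
        · show (1:ℤ) ≤ rcfD x 1
          rw [rcfD_succ]
          obtain ⟨gi, g0, g1⟩ := gauss_props x hirr h0
          exact rcfD_zero_ge_one _ g0 g1
        · show (u + u') * ((rcfPQ x 1).2 + 1 * (rcfPQ x 2).2) =
            (v + v') * ((rcfPQ x 1).1 + 1 * (rcfPQ x 2).1)
          have h2 : rcfPQ x 2 = (rcfD x 0 * (rcfPQ x 1).1 + (rcfPQ x 0).1,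
              rcfD x 0 * (rcfPQ x 1).2 + (rcfPQ x 0).2) := rfl
          rw [h2]
          subst hu0 hu'e hve hv'e
          simp [rcfPQ, ← hd]
          try ring
    · -- u ≥ 1 : recurse
      have hxd : x < 1/(d:ℝ) := by
        rw [lt_div_iff₀ (by exact_mod_cast hd1 : (0:ℝ) < (d:ℝ))]
        linarith [hdx]
      have hduv : d * u < v := by
        have h2' : (v:ℝ) * x < v * (1/d) := by
          apply mul_lt_mul_of_pos_left hxd
          exact_mod_cast hv1
        have h3' : (u:ℝ) < v / d := by rw [div_eq_mul_one_div]; linarith [hlx]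
        have h4' : (u:ℝ) * d < v := by
          rw [lt_div_iff₀ (by exact_mod_cast hd1 : (0:ℝ) < (d:ℝ))] at h3'
          linarith
        have h5' : ((d*u:ℤ):ℝ) < ((v:ℤ):ℝ) := by push_cast; nlinarith
        exact_mod_cast h5'
      have hvdu' : d * u' ≤ v' := by
        by_contra h
        push_neg at h
        have e1 : u' * (d*u+1) ≤ u' * v := mul_le_mul_of_nonneg_left (by omega) hu'
        have e2 : u * v' ≤ u * (d*u'-1) := mul_le_mul_of_nonneg_left (by omega) hu
        nlinarith [e1, e2, hdet]
      obtain ⟨hirr', h0', h1'⟩ := gauss_props x hirr h0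
      have hx'eq : gauss x = 1/x - (d:ℝ) := by rw [gauss_eq x hxne, hdf]
      have hin1 : ((v' - d*u' : ℤ):ℝ) < ((u':ℤ):ℝ) * gauss x := by
        have h6 : (v':ℝ) < (u':ℝ)/x := (lt_div_iff₀ h0).mpr hrx
        push_cast
        rw [hx'eq, mul_sub, mul_one_div]
        linarith
      have hin2 : ((u:ℤ):ℝ) * gauss x < ((v - d*u : ℤ):ℝ) := by
        have h6 : (u:ℝ)/x < (v:ℝ) := (div_lt_iff₀ h0).mpr hlx
        push_cast
        rw [hx'eq, mul_sub, mul_one_div]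
        linarith
      have hbound : (v' - d*u') + u' + (v - d*u) + u ≤ (N:ℤ) := by
        have hm1 : u ≤ d*u := le_mul_of_one_le_left hu hd1
        have hm2 : u' ≤ d*u' := le_mul_of_one_le_left hu' hd1
        push_cast at hN
        linarith
      obtain ⟨m, hm1, j, hj1, hj2, heq⟩ :=
        ih (gauss x) hirr' h0' h1' (v' - d*u') u' (v - d*u) u
          (by omega) hu' (by omega) hu (by linear_combination hdet)
          hin1 hin2 hbound
      have hmm : m - 1 + 1 = m := by omega
      refine ⟨m+1, by omega, j, hj1, ?_, ?_⟩
      · simp only [Nat.add_sub_cancel]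
        have hrd : rcfD x m = rcfD (gauss x) (m-1) := by
          conv_lhs => rw [show m = (m-1)+1 from hmm.symm]
          rw [rcfD_succ]
        rw [hrd]
        exact hj2
      · simp only [Nat.add_sub_cancel]
        have t1 := rcfPQ_transfer x (m-1)
        rw [hmm] at t1
        have t2 := rcfPQ_transfer x m
        rw [t1.1, t1.2, t2.1, t2.2, ← hd]
        linear_combination -heq

lemma irr_of_moebius (y T : ℝ) (a e : ℤ) (he : e = 1 ∨ e = -1)
    (hid : y * ((a:ℝ) * T + ((a:ℝ) + (e:ℝ))) = ((a:ℝ) - 1) * T + ((a:ℝ) - 1 + (e:ℝ)))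
    (hy : Irrational y) : Irrational T := by
  by_contra h
  obtain ⟨r, hr⟩ : T ∈ Set.range ((↑) : ℚ → ℝ) := not_not.mp h
  by_cases hz : (a:ℚ) * r + ((a:ℚ) + (e:ℚ)) = 0
  · have hzR : (a:ℝ) * T + ((a:ℝ) + (e:ℝ)) = 0 := by
      rw [← hr]; exact_mod_cast congrArg (fun q : ℚ => (q:ℝ)) hz
    have hnum : ((a:ℚ) - 1) * r + ((a:ℚ) - 1 + (e:ℚ)) = 0 := by
      have : ((a:ℝ) - 1) * T + ((a:ℝ) - 1 + (e:ℝ)) = 0 := by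
        rw [← hid, hzR, mul_zero]
      rw [← hr] at this
      exact_mod_cast this
    have hr1 : r = -1 := by
      have := sub_eq_zero.mpr (hz.trans hnum.symm).symm
      nlinarith [hz, hnum]
    rw [hr1] at hz
    rcases he with h | h <;> rw [h] at hz <;> push_cast at hz <;> nlinarith
  · apply hy
    refine ⟨(((a:ℚ) - 1) * r + ((a:ℚ) - 1 + (e:ℚ))) / ((a:ℚ) * r + ((a:ℚ) + (e:ℚ))), ?_⟩
    have hzR : (a:ℝ) * T + ((a:ℝ) + (e:ℝ)) ≠ 0 := by
      rw [← hr]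
      intro hcon
      apply hz
      exact_mod_cast hcon
    push_cast
    rw [hr, div_eq_iff hzR]
    linarith [hid]

lemma oocf_step (y : ℝ) (hirr : Irrational y) (h0 : 0 < y) (h1 : y < 1) :
    Irrational (oocfT y) ∧ 0 < oocfT y ∧ oocfT y < 1 ∧
    y * ((oocfA y : ℝ) * oocfT y + ((oocfA y : ℝ) + (oocfE y : ℝ))) =
      ((oocfA y : ℝ) - 1) * oocfT y + ((oocfA y : ℝ) - 1 + (oocfE y : ℝ)) ∧
    1 ≤ oocfA y ∧ (oocfE y = 1 ∨ oocfE y = -1) ∧ (oocfE y = -1 → 2 ≤ oocfA y) := by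
  have h1y : 0 < 1 - y := by linarith
  set k : ℤ := ⌊1 / (1 - y)⌋ with hk
  have hfl : (k:ℝ) ≤ 1 / (1 - y) := Int.floor_le _
  have hfu : 1 / (1 - y) < (k:ℝ) + 1 := Int.lt_floor_add_one _
  have hone : (1:ℝ) < 1 / (1 - y) := by
    rw [lt_div_iff₀ h1y]; linarith
  have hk1 : 1 ≤ k := by
    rw [hk]
    exact Int.le_floor.mpr (by exact_mod_cast hone.le)
  have hk1R : (1:ℝ) ≤ (k:ℝ) := by exact_mod_cast hk1
  have hloweak : (k:ℝ) - 1 ≤ (k:ℝ) * y := by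
    have := (le_div_iff₀ h1y).mp hfl
    nlinarith
  have hlo : (k:ℝ) - 1 < (k:ℝ) * y := by
    rcases lt_or_eq_of_le hloweak with h | h
    · exact h
    · exfalso
      apply hirr
      refine ⟨((k:ℚ) - 1) / (k:ℚ), ?_⟩
      have hkne : (k:ℝ) ≠ 0 := by linarith
      push_cast
      rw [div_eq_iff hkne]
      linarith
  have hhi : ((k:ℝ) + 1) * y < (k:ℝ) := by
    have := (div_lt_iff₀ h1y).mp hfu
    nlinarith
  have hN1 : 0 < (k:ℝ) * y - ((k:ℝ) - 1) := by linarith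
  have hN2 : 0 < (k:ℝ) - ((k:ℝ) + 1) * y := by linarith
  have hden : (0:ℝ) < 2 * (k:ℝ) + 1 := by linarith
  have hyne1 : y ≠ 1 := ne_of_lt h1
  have hTdef : oocfT y = if y < (2 * (k:ℝ) - 1) / (2 * (k:ℝ) + 1) then
      ((k:ℝ) * y - ((k:ℝ) - 1)) / ((k:ℝ) - ((k:ℝ) + 1) * y)
    else ((k:ℝ) - ((k:ℝ) + 1) * y) / ((k:ℝ) * y - ((k:ℝ) - 1)) := by
    rw [oocfT, if_neg hyne1, ← hk]
  have hAdef : oocfA y = if y < (2 * (k:ℝ) - 1) / (2 * (k:ℝ) + 1) then k + 1 else k := by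
    rw [oocfA, ← hk]
  have hEdef : oocfE y = if y < (2 * (k:ℝ) - 1) / (2 * (k:ℝ) + 1) then -1 else 1 := by
    rw [oocfE, ← hk]
  by_cases hc : y < (2 * (k:ℝ) - 1) / (2 * (k:ℝ) + 1)
  · -- lower branch
    rw [if_pos hc] at hTdef hAdef hEdef
    have hcc : (2 * (k:ℝ) + 1) * y < 2 * (k:ℝ) - 1 := by
      rw [lt_div_iff₀ hden] at hc; linarith
    have hT1 : oocfT y < 1 := by
      rw [hTdef, div_lt_one hN2]; linarith
    have hT0 : 0 < oocfT y := by
      rw [hTdef]; exact div_pos hN1 hN2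
    have hid : y * ((oocfA y : ℝ) * oocfT y + ((oocfA y : ℝ) + (oocfE y : ℝ))) =
        ((oocfA y : ℝ) - 1) * oocfT y + ((oocfA y : ℝ) - 1 + (oocfE y : ℝ)) := by
      rw [hTdef, hAdef, hEdef]
      push_cast
      have hne : (k:ℝ) - ((k:ℝ) + 1) * y ≠ 0 := hN2.ne'
      have key := div_mul_cancel₀ ((k:ℝ) * y - ((k:ℝ) - 1)) hne
      linear_combination (-1:ℝ) * key
    refine ⟨irr_of_moebius y _ (oocfA y) (oocfE y) (by rw [hEdef]; right; rfl) hid hirr,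
      hT0, hT1, hid, by rw [hAdef]; omega, by rw [hEdef]; right; rfl, fun _ => by rw [hAdef]; omega⟩
  · -- upper branch
    rw [if_neg hc] at hTdef hAdef hEdef
    push_neg at hc
    have hcstrict : (2 * (k:ℝ) - 1) / (2 * (k:ℝ) + 1) < y := by
      rcases lt_or_eq_of_le hc with h | h
      · exact h
      · exfalso
        apply hirr
        exact ⟨(2 * (k:ℚ) - 1) / (2 * (k:ℚ) + 1), by rw [← h]; push_cast; ring⟩
    have hcc : 2 * (k:ℝ) - 1 < (2 * (k:ℝ) + 1) * y := by
      rw [div_lt_iff₀ hden] at hcstrict; linarith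
    have hT1 : oocfT y < 1 := by
      rw [hTdef, div_lt_one hN1]; linarith
    have hT0 : 0 < oocfT y := by
      rw [hTdef]; exact div_pos hN2 hN1
    have hid : y * ((oocfA y : ℝ) * oocfT y + ((oocfA y : ℝ) + (oocfE y : ℝ))) =
        ((oocfA y : ℝ) - 1) * oocfT y + ((oocfA y : ℝ) - 1 + (oocfE y : ℝ)) := by
      rw [hTdef, hAdef, hEdef]
      push_cast
      have hne : (k:ℝ) * y - ((k:ℝ) - 1) ≠ 0 := hN1.ne'
      have key := div_mul_cancel₀ ((k:ℝ) - ((k:ℝ) + 1) * y) hne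
      linear_combination key
    refine ⟨irr_of_moebius y _ (oocfA y) (oocfE y) (by rw [hEdef]; left; rfl) hid hirr,
      hT0, hT1, hid, by rw [hAdef]; omega, by rw [hEdef]; left; rfl, fun hcon => ?_⟩
    rw [hEdef] at hcon
    exact absurd hcon (by norm_num)


lemma oocfP'_succ (x : ℝ) (n : ℕ) :
    oocfP' x (n+1) = oocfA (oocfT^[n] x) * oocfP x n - oocfP' x n := rfl

lemma oocfQ'_succ (x : ℝ) (n : ℕ) :
    oocfQ' x (n+1) = oocfA (oocfT^[n] x) * oocfQ x n - oocfQ' x n := rfl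

lemma oocfP_succ (x : ℝ) (n : ℕ) :
    oocfP x (n+1) = 2 * (oocfA (oocfT^[n] x) * oocfP x n - oocfP' x n)
      + oocfE (oocfT^[n] x) * oocfP x n := rfl

lemma oocfQ_succ (x : ℝ) (n : ℕ) :
    oocfQ x (n+1) = 2 * (oocfA (oocfT^[n] x) * oocfQ x n - oocfQ' x n)
      + oocfE (oocfT^[n] x) * oocfQ x n := rfl

lemma oocfP''_succ (x : ℝ) (n : ℕ) :
    oocfP'' x (n+1) = oocfP' x (n+1) + oocfE (oocfT^[n] x) * oocfP x n := rfl

lemma oocfQ''_succ (x : ℝ) (n : ℕ) :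
    oocfQ'' x (n+1) = oocfQ' x (n+1) + oocfE (oocfT^[n] x) * oocfQ x n := rfl

lemma oocf_invariants (x : ℝ) (hirr : Irrational x) (h0 : 0 < x) (h1 : x < 1) : ∀ n : ℕ,
    (Irrational (oocfT^[n] x) ∧ 0 < oocfT^[n] x ∧ oocfT^[n] x < 1) ∧
    0 ≤ oocfP' x n ∧ 0 ≤ oocfP'' x n ∧ 0 ≤ oocfQ' x n ∧ 1 ≤ oocfQ'' x n ∧
    oocfP x n = oocfP' x n + oocfP'' x n ∧ oocfQ x n = oocfQ' x n + oocfQ'' x n ∧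
    (oocfP' x n * oocfQ'' x n - oocfP'' x n * oocfQ' x n = 1 ∨
     oocfP' x n * oocfQ'' x n - oocfP'' x n * oocfQ' x n = -1) ∧
    x * ((oocfQ' x n : ℝ) * oocfT^[n] x + (oocfQ'' x n : ℝ)) =
      ((oocfP' x n : ℝ) * oocfT^[n] x + (oocfP'' x n : ℝ)) := by
  intro n
  induction n with
  | zero =>
    refine ⟨⟨hirr, h0, h1⟩, ?_⟩
    simp only [Function.iterate_zero_apply]
    norm_num [oocfP', oocfQ', oocfP, oocfQ, oocfP'', oocfQ'', oocfConv]
  | succ n ih =>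
    obtain ⟨⟨hti, ht0, ht1⟩, hp', hp'', hq', hq'', hP, hQ, hdet, hid⟩ := ih
    obtain ⟨hti', ht0', ht1', hstep, ha1, he, hae⟩ := oocf_step _ hti ht0 ht1
    rw [← Function.iterate_succ_apply' oocfT n x] at hti' ht0' ht1'
    set a : ℤ := oocfA (oocfT^[n] x) with haa
    set e : ℤ := oocfE (oocfT^[n] x) with hee
    have hPn0 : 0 ≤ oocfP x n := by omega
    have hQn1 : 1 ≤ oocfQ x n := by omega
    have hnp' : 0 ≤ oocfP' x (n+1) := by
      rw [oocfP'_succ, ← haa]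
      have : (1:ℤ) * oocfP x n ≤ a * oocfP x n :=
        mul_le_mul_of_nonneg_right ha1 hPn0
      omega
    have hnp'' : 0 ≤ oocfP'' x (n+1) := by
      rw [oocfP''_succ, oocfP'_succ, ← haa, ← hee]
      rcases he with h | h
      · rw [h]
        have : (1:ℤ) * oocfP x n ≤ a * oocfP x n :=
          mul_le_mul_of_nonneg_right ha1 hPn0
        omega
      · rw [h]
        have ha2 := hae h
        have : (2:ℤ) * oocfP x n ≤ a * oocfP x n :=
          mul_le_mul_of_nonneg_right ha2 hPn0
        omega
    have hnq' : 0 ≤ oocfQ' x (n+1) := by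
      rw [oocfQ'_succ, ← haa]
      have : (1:ℤ) * oocfQ x n ≤ a * oocfQ x n :=
        mul_le_mul_of_nonneg_right ha1 (by omega)
      omega
    have hnq'' : 1 ≤ oocfQ'' x (n+1) := by
      rw [oocfQ''_succ, oocfQ'_succ, ← haa, ← hee]
      rcases he with h | h
      · rw [h]
        have : (1:ℤ) * oocfQ x n ≤ a * oocfQ x n :=
          mul_le_mul_of_nonneg_right ha1 (by omega)
        omega
      · rw [h]
        have ha2 := hae h
        have : (2:ℤ) * oocfQ x n ≤ a * oocfQ x n :=
          mul_le_mul_of_nonneg_right ha2 (by omega)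
        omega
    have hnP : oocfP x (n+1) = oocfP' x (n+1) + oocfP'' x (n+1) := by
      rw [oocfP_succ, oocfP''_succ, oocfP'_succ, ← haa, ← hee]; ring
    have hnQ : oocfQ x (n+1) = oocfQ' x (n+1) + oocfQ'' x (n+1) := by
      rw [oocfQ_succ, oocfQ''_succ, oocfQ'_succ, ← haa, ← hee]; ring
    have he2 : e * e = 1 := by rcases he with h | h <;> rw [h] <;> ring
    have hndet : oocfP' x (n+1) * oocfQ'' x (n+1) - oocfP'' x (n+1) * oocfQ' x (n+1) =
        -e * (oocfP' x n * oocfQ'' x n - oocfP'' x n * oocfQ' x n) := by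
      rw [oocfP''_succ, oocfQ''_succ, oocfP'_succ, oocfQ'_succ, ← haa, ← hee, hP, hQ]
      ring
    have hnid : x * ((oocfQ' x (n+1) : ℝ) * oocfT^[n+1] x + (oocfQ'' x (n+1) : ℝ)) =
        ((oocfP' x (n+1) : ℝ) * oocfT^[n+1] x + (oocfP'' x (n+1) : ℝ)) := by
      rw [oocfP''_succ, oocfQ''_succ, oocfP'_succ, oocfQ'_succ, ← haa, ← hee, hP, hQ]
      rw [Function.iterate_succ_apply' oocfT n x]
      push_cast
      set s : ℝ := oocfT (oocfT^[n] x)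
      set t : ℝ := oocfT^[n] x
      linear_combination ((a:ℝ) * s + (a:ℝ) + (e:ℝ)) * hid +
        (((oocfP' x n : ℤ):ℝ) - x * ((oocfQ' x n : ℤ):ℝ)) * hstep
    refine ⟨⟨hti', ht0', ht1'⟩, hnp', hnp'', hnq', hnq'', hnP, hnQ, ?_, hnid⟩
    rcases he with h | h <;> rcases hdet with hd | hd <;> rw [hndet, h, hd] <;> norm_num

/-- Every OOCF principal convergent `p_k/q_k` of an irrational `x ∈ (0,1)` is an
intermediate convergent of the regular continued fraction of `x`: there are `n ≥ 1` and
`1 ≤ j ≤ d_n` with `p_k/q_k = (p^R_{n-2} + j p^R_{n-1})/(q^R_{n-2} + j q^R_{n-1})`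
(recall `rcfPQ x m = (p^R_{m-1}, q^R_{m-1})`). -/
theorem oocf_principal_convergent_is_intermediate
    (x : ℝ) (hx : x ∈ Set.Ioo (0 : ℝ) 1) (hirr : Irrational x)
    (k : ℕ) (hk : 1 ≤ k) :
    ∃ n : ℕ, 1 ≤ n ∧ ∃ j : ℤ, 1 ≤ j ∧ j ≤ rcfD x (n - 1) ∧
      oocfP x k * ((rcfPQ x (n - 1)).2 + j * (rcfPQ x n).2) =
        oocfQ x k * ((rcfPQ x (n - 1)).1 + j * (rcfPQ x n).1) := by
  obtain ⟨⟨hti, ht0, ht1⟩, hp', hp'', hq', hq'', hP, hQ, hdet, hid⟩ :=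
    oocf_invariants x hirr hx.1 hx.2 k
  set t : ℝ := oocfT^[k] x with htdef
  have hq'R : (0:ℝ) ≤ (oocfQ' x k : ℝ) := by exact_mod_cast hq'
  have hq''R : (1:ℝ) ≤ (oocfQ'' x k : ℝ) := by exact_mod_cast hq''
  have hpos : (0:ℝ) < (oocfQ' x k : ℝ) * t + (oocfQ'' x k : ℝ) := by
    nlinarith [mul_nonneg hq'R ht0.le]
  have key1 : ((oocfP' x k : ℝ) - (oocfQ' x k : ℝ) * x) *
      ((oocfQ' x k : ℝ) * t + (oocfQ'' x k : ℝ)) =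
      ((oocfP' x k * oocfQ'' x k - oocfP'' x k * oocfQ' x k : ℤ) : ℝ) := by
    push_cast
    linear_combination (-((oocfQ' x k : ℤ) : ℝ)) * hid
  have key2 : ((oocfQ'' x k : ℝ) * x - (oocfP'' x k : ℝ)) *
      ((oocfQ' x k : ℝ) * t + (oocfQ'' x k : ℝ)) =
      t * ((oocfP' x k * oocfQ'' x k - oocfP'' x k * oocfQ' x k : ℤ) : ℝ) := by
    push_cast
    linear_combination ((oocfQ'' x k : ℤ) : ℝ) * hid
  rcases hdet with hd | hd
  · -- det = 1 : lower parent (p'', q''), upper parent (p', q')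
    rw [hd] at key1 key2
    push_cast at key1 key2
    have h7 : (0:ℝ) < (oocfP' x k : ℝ) - (oocfQ' x k : ℝ) * x := by nlinarith
    have h8 : (0:ℝ) < (oocfQ'' x k : ℝ) * x - (oocfP'' x k : ℝ) := by nlinarith
    obtain ⟨n, hn, j, hj1, hj2, heq⟩ :=
      intermediate_of_parents
        (oocfP'' x k + oocfQ'' x k + oocfP' x k + oocfQ' x k).toNat
        x hirr hx.1 hx.2 (oocfP'' x k) (oocfQ'' x k) (oocfP' x k) (oocfQ' x k)
        hp'' (by omega) hp' hq' (by linarith) (by linarith) (by linarith)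
        (Int.self_le_toNat _)
    exact ⟨n, hn, j, hj1, hj2, by rw [hP, hQ]; linear_combination heq⟩
  · -- det = -1 : lower parent (p', q'), upper parent (p'', q'')
    rw [hd] at key1 key2
    push_cast at key1 key2
    have h7 : (oocfP' x k : ℝ) - (oocfQ' x k : ℝ) * x < 0 := by nlinarith
    have h8 : (oocfQ'' x k : ℝ) * x - (oocfP'' x k : ℝ) < 0 := by nlinarith
    obtain ⟨n, hn, j, hj1, hj2, heq⟩ :=
      intermediate_of_parents
        (oocfP' x k + oocfQ' x k + oocfP'' x k + oocfQ'' x k).toNat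
        x hirr hx.1 hx.2 (oocfP' x k) (oocfQ' x k) (oocfP'' x k) (oocfQ'' x k)
        hp' hq' hp'' (by omega) (by linarith) (by linarith) (by linarith)
        (Int.self_le_toNat _)
    exact ⟨n, hn, j, hj1, hj2, by rw [hP, hQ]; linear_combination heq⟩
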